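/- For x ∈ ℕ^n, the number of integer points in Π_n(x) equals the number of plane partitions of shape (u_n, u_{n−1}, …, u_1) with largest part at most 2, where u_i = x_1+⋯+x_i. -/
import Mathlib

open Finset

namespace LPPP
variable {n : ℕ}

/-- pad a function on `Fin n` by zero -/
def pad {M : Type*} [Zero M] (f : Fin n → M) (m : ℕ) : M :=
  if h : m < n then f ⟨m, h⟩ else 0

lemma pad_lt {M : Type*} [Zero M] (f : Fin n → M) {m : ℕ} (h : m < n) :
    pad f m = f ⟨m, h⟩ := dif_pos h

lemma pad_ge {M : Type*} [Zero M] (f : Fin n → M) {m : ℕ} (h : n ≤ m) :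
    pad f m = 0 := dif_neg (by omega)

lemma pad_fin {M : Type*} [Zero M] (f : Fin n → M) (i : Fin n) :
    pad f (i : ℕ) = f i := by rw [pad_lt f i.isLt]

lemma sum_Iic_pad {M : Type*} [AddCommMonoid M] (f : Fin n → M) (i : Fin n) :
    ∑ j ∈ Finset.Iic i, f j = ∑ r ∈ Finset.range ((i : ℕ) + 1), pad f r := by
  classical
  have h1 : Finset.Iic i = Finset.univ.filter (· ≤ i) := by ext j; simp
  have h3 := Fin.sum_univ_eq_sum_range (fun r : ℕ => if r ≤ (i : ℕ) then pad f r else 0) n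
  rw [h1, Finset.sum_filter]
  have h2 : ∀ j : Fin n, (if j ≤ i then f j else 0)
      = (fun r : ℕ => if r ≤ (i : ℕ) then pad f r else 0) (j : ℕ) := by
    intro j; simp only [Fin.le_def, pad_fin]
  rw [Finset.sum_congr rfl (fun j _ => h2 j), h3]
  rw [← Finset.sum_subset (Finset.range_subset_range.mpr i.isLt)]
  · exact Finset.sum_congr rfl (fun r hr => if_pos (by
      have := Finset.mem_range.mp hr; omega))
  · intro r _ hr
    exact if_neg (by simp at hr ⊢; omega)

/-- the partial sums of `x`, padded -/
def U (x : Fin n → ℕ) (m : ℕ) : ℕ := ∑ r ∈ Finset.range m, pad x r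

lemma U_mono (x : Fin n → ℕ) {a b : ℕ} (h : a ≤ b) : U x a ≤ U x b :=
  Finset.sum_le_sum_of_subset (Finset.range_subset_range.mpr h)

/-- the row-length sum appearing in the theorem -/
lemma filter_sum_eq (x : Fin n → ℕ) (i : ℕ) :
    ∑ l ∈ Finset.univ.filter (fun l : Fin n => (l : ℕ) + i < n), x l = U x (n - i) := by
  classical
  have h3 := Fin.sum_univ_eq_sum_range (fun r : ℕ => if r + i < n then pad x r else 0) n
  rw [Finset.sum_filter]
  have h2 : ∀ j : Fin n, (if (j : ℕ) + i < n then x j else 0)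
      = (fun r : ℕ => if r + i < n then pad x r else 0) (j : ℕ) := by
    intro j; simp only [pad_fin]
  rw [Finset.sum_congr rfl (fun j _ => h2 j), h3]
  rw [U, ← Finset.sum_subset (Finset.range_subset_range.mpr (Nat.sub_le n i))]
  · exact Finset.sum_congr rfl (fun r hr => if_pos (by
      have := Finset.mem_range.mp hr; omega))
  · intro r hr hr2
    exact if_neg (by simp at hr hr2; omega)

lemma sum_Iic_cast (x : Fin n → ℕ) (i : Fin n) :
    ∑ j ∈ Finset.Iic i, (x j : ℤ) = (U x ((i : ℕ) + 1) : ℤ) := by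
  rw [show ∑ j ∈ Finset.Iic i, ((x j : ℤ)) = ((∑ j ∈ Finset.Iic i, x j : ℕ) : ℤ) from
    (Nat.cast_sum _ _).symm, sum_Iic_pad]
  rfl

/-- telescoping sum -/
lemma telescope (g : ℕ → ℤ) (hgn : g n = 0) :
    ∀ m, m ≤ n → ∑ r ∈ Finset.range m, (g (n - 1 - r) - g (n - r)) = g (n - m) := by
  intro m
  induction m with
  | zero => intro _; simp [hgn]
  | succ m ih =>
    intro hm
    rw [Finset.sum_range_succ, ih (by omega)]
    have h : n - 1 - m = n - (m + 1) := by omega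
    rw [h]; ring

/-- a downward-closed finset of ℕ is an initial segment -/
lemma dc_eq_range (S : Finset ℕ) (h : ∀ a b : ℕ, a ≤ b → b ∈ S → a ∈ S) :
    S = Finset.range S.card := by
  ext j
  simp only [Finset.mem_range]
  constructor
  · intro hj
    have hsub : Finset.Iic j ⊆ S := fun a ha => h a j (Finset.mem_Iic.mp ha) hj
    have := Finset.card_le_card hsub
    rw [Nat.card_Iic] at this
    omega
  · intro hj
    by_contra hjS
    have hsub : S ⊆ Finset.range j := by
      intro b hb
      rw [Finset.mem_range]
      by_contra hbj
      exact hjS (h j b (by omega) hb)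
    have := Finset.card_le_card hsub
    rw [Finset.card_range] at this
    omega

/-- The common intermediate type: bounded antitone sequences. -/
def TT (n : ℕ) (x : Fin n → ℕ) : Type :=
  {t : Fin n → ℕ // (∀ i : Fin n, t i ≤ U x (n - (i : ℕ))) ∧
    ∀ i : Fin n, ∀ h : (i : ℕ) + 1 < n, t ⟨(i : ℕ) + 1, h⟩ ≤ t i}

/-! ### The Y side -/

/-- integer partial sums -/
def SZ (y : Fin n → ℤ) (m : ℕ) : ℤ := ∑ r ∈ Finset.range m, pad y r

lemma pad_nonneg (y : Fin n → ℤ) (hy : ∀ i, 0 ≤ y i) (r : ℕ) : 0 ≤ pad y r := by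
  unfold pad; split
  · exact hy _
  · exact le_refl 0

lemma SZ_nonneg (y : Fin n → ℤ) (hy : ∀ i, 0 ≤ y i) (m : ℕ) : 0 ≤ SZ y m :=
  Finset.sum_nonneg fun r _ => pad_nonneg y hy r

lemma SZ_mono (y : Fin n → ℤ) (hy : ∀ i, 0 ≤ y i) {a b : ℕ} (h : a ≤ b) :
    SZ y a ≤ SZ y b :=
  Finset.sum_le_sum_of_subset_of_nonneg (Finset.range_subset_range.mpr h)
    (fun r _ _ => pad_nonneg y hy r)

lemma sum_Iic_SZ (y : Fin n → ℤ) (i : Fin n) :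
    ∑ j ∈ Finset.Iic i, y j = SZ y ((i : ℕ) + 1) := sum_Iic_pad y i


variable (x : Fin n → ℕ)

/-- forward map on the Y side -/
def toTY (y : Fin n → ℤ) : Fin n → ℕ := fun i => (SZ y (n - (i : ℕ))).toNat

/-- padded integer version of `t` -/
def Tz (t : Fin n → ℕ) : ℕ → ℤ := pad (fun i => (t i : ℤ))

lemma Tz_nonneg (t : Fin n → ℕ) (m : ℕ) : 0 ≤ Tz t m := by
  unfold Tz pad; split
  · exact Int.natCast_nonneg _
  · exact le_refl 0

lemma Tz_anti (t : TT n x) : ∀ a b : ℕ, a ≤ b → Tz t.1 b ≤ Tz t.1 a := by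
  intro a b hab
  induction b, hab using Nat.le_induction with
  | base => exact le_refl _
  | succ b hab ih =>
    refine le_trans ?_ ih
    by_cases hb1 : b + 1 < n
    · have hb : b < n := by omega
      have := t.2.2 ⟨b, hb⟩ hb1
      unfold Tz
      rw [pad_lt _ hb1, pad_lt _ hb]
      exact_mod_cast this
    · unfold Tz
      rw [pad_ge _ (by omega)]
      exact Tz_nonneg t.1 b

/-- backward map on the Y side -/
def fromTY (t : TT n x) : Fin n → ℤ :=
  fun k => Tz t.1 (n - 1 - (k : ℕ)) - Tz t.1 (n - (k : ℕ))

lemma SZ_fromTY (t : TT n x) : ∀ m, m ≤ n → SZ (fromTY x t) m = Tz t.1 (n - m) := by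
  intro m hm
  have hcong : ∀ r ∈ Finset.range m, pad (fromTY x t) r
      = Tz t.1 (n - 1 - r) - Tz t.1 (n - r) := by
    intro r hr
    have hrn : r < n := lt_of_lt_of_le (Finset.mem_range.mp hr) hm
    rw [pad_lt _ hrn]
    rfl
  rw [SZ, Finset.sum_congr rfl hcong]
  exact telescope (Tz t.1) (by unfold Tz; rw [pad_ge _ (le_refl n)]) m hm

lemma toTY_mem (y : Fin n → ℤ)
    (hy : ∀ i : Fin n, 0 ≤ y i ∧
      ∑ j ∈ Finset.Iic i, y j ≤ ∑ j ∈ Finset.Iic i, (x j : ℤ)) :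
    (∀ i : Fin n, toTY y i ≤ U x (n - (i : ℕ))) ∧
      ∀ i : Fin n, ∀ h : (i : ℕ) + 1 < n, toTY y ⟨(i : ℕ) + 1, h⟩ ≤ toTY y i := by
  have hy1 : ∀ i, 0 ≤ y i := fun i => (hy i).1
  constructor
  · intro i
    have hin : (i : ℕ) < n := i.isLt
    set j : Fin n := ⟨n - (i : ℕ) - 1, by omega⟩ with hj
    have hji : (j : ℕ) + 1 = n - (i : ℕ) := by simp [hj]; omega
    have hb := (hy j).2
    rw [sum_Iic_SZ, sum_Iic_cast, hji] at hb
    exact Int.toNat_le.mpr hb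
  · intro i h
    show (SZ y (n - ((i : ℕ) + 1))).toNat ≤ (SZ y (n - (i : ℕ))).toNat
    exact Int.toNat_le_toNat (SZ_mono y hy1 (by omega))

/-- the Y-side equivalence -/
def equivY :
    {y : Fin n → ℤ // ∀ i : Fin n, 0 ≤ y i ∧
      ∑ j ∈ Finset.Iic i, y j ≤ ∑ j ∈ Finset.Iic i, (x j : ℤ)} ≃ TT n x where
  toFun y := ⟨toTY y.1, toTY_mem x y.1 y.2⟩
  invFun t := ⟨fromTY x t, by
    intro i
    constructor
    · have := Tz_anti x t (n - 1 - (i : ℕ)) (n - (i : ℕ)) (by omega)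
      rw [fromTY]
      omega
    · have hin : (i : ℕ) < n := i.isLt
      rw [sum_Iic_SZ, sum_Iic_cast, SZ_fromTY x t ((i : ℕ) + 1) (by omega)]
      have hnn : n - ((i : ℕ) + 1) < n := by omega
      unfold Tz
      rw [pad_lt _ hnn]
      have := t.2.1 ⟨n - ((i : ℕ) + 1), hnn⟩
      have heq : n - (n - ((i : ℕ) + 1)) = (i : ℕ) + 1 := by omega
      rw [heq] at this
      exact_mod_cast this⟩
  left_inv := by
    rintro ⟨y, hy⟩
    have hy1 : ∀ i, 0 ≤ y i := fun i => (hy i).1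
    apply Subtype.ext
    funext k
    show Tz (toTY y) (n - 1 - (k : ℕ)) - Tz (toTY y) (n - (k : ℕ)) = y k
    have hkey : ∀ m, m ≤ n → Tz (toTY y) m = SZ y (n - m) := by
      intro m hmn
      rcases lt_or_eq_of_le hmn with hm | hm
      · unfold Tz toTY
        rw [pad_lt _ hm,]
        rw [Int.toNat_of_nonneg (SZ_nonneg y hy1 _)]
      · subst hm
        unfold Tz
        rw [pad_ge _ (le_refl m), Nat.sub_self, SZ, Finset.range_zero,
          Finset.sum_empty]
    have hkn : (k : ℕ) < n := k.isLt
    rw [hkey _ (by omega), hkey _ (by omega)]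
    have h1 : n - (n - 1 - (k : ℕ)) = (k : ℕ) + 1 := by omega
    have h2 : n - (n - (k : ℕ)) = (k : ℕ) := by omega
    rw [h1, h2, SZ, SZ, Finset.sum_range_succ, pad_fin]
    ring
  right_inv := by
    rintro ⟨t, ht⟩
    apply Subtype.ext
    funext i
    show (SZ (fromTY x ⟨t, ht⟩) (n - (i : ℕ))).toNat = t i
    rw [SZ_fromTY x ⟨t, ht⟩ _ (Nat.sub_le n _)]
    have hin : (i : ℕ) < n := i.isLt
    have heq : n - (n - (i : ℕ)) = (i : ℕ) := by omega
    unfold Tz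
    rw [heq, pad_fin]
    exact Int.toNat_natCast _

/-! ### The P side -/

/-- the conditions on a plane partition, in `U`-form -/
def PU (π : Fin n → ℕ → ℕ) : Prop :=
  (∀ (i : Fin n) (j : ℕ), j < U x (n - (i : ℕ)) → 1 ≤ π i j ∧ π i j ≤ 2) ∧
  (∀ (i : Fin n) (j : ℕ), U x (n - (i : ℕ)) ≤ j → π i j = 0) ∧
  (∀ (i : Fin n) (j : ℕ), j + 1 < U x (n - (i : ℕ)) → π i (j + 1) ≤ π i j) ∧
  (∀ (i : Fin n) (h : (i : ℕ) + 1 < n) (j : ℕ), j < U x (n - ((i : ℕ) + 1)) →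
    π ⟨(i : ℕ) + 1, h⟩ j ≤ π i j)

lemma Pprop_iff (π : Fin n → ℕ → ℕ) :
    ((∀ (i : Fin n) (j : ℕ),
        j < ∑ l ∈ Finset.univ.filter (fun l : Fin n => (l : ℕ) + (i : ℕ) < n), x l →
        1 ≤ π i j ∧ π i j ≤ 2) ∧
      (∀ (i : Fin n) (j : ℕ),
        (∑ l ∈ Finset.univ.filter (fun l : Fin n => (l : ℕ) + (i : ℕ) < n), x l) ≤ j →
        π i j = 0) ∧
      (∀ (i : Fin n) (j : ℕ),
        j + 1 < ∑ l ∈ Finset.univ.filter (fun l : Fin n => (l : ℕ) + (i : ℕ) < n), x l →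
        π i (j + 1) ≤ π i j) ∧
      (∀ (i : Fin n) (h : (i : ℕ) + 1 < n) (j : ℕ),
        j < ∑ l ∈ Finset.univ.filter
            (fun l : Fin n => (l : ℕ) + ((i : ℕ) + 1) < n), x l →
        π ⟨(i : ℕ) + 1, h⟩ j ≤ π i j)) ↔ PU x π := by
  unfold PU
  simp only [filter_sum_eq]

lemma row_anti {π : Fin n → ℕ → ℕ} (hπ : PU x π) (i : Fin n) :
    ∀ a b : ℕ, a ≤ b → b < U x (n - (i : ℕ)) → π i b ≤ π i a := by
  intro a b hab
  induction b, hab using Nat.le_induction with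
  | base => intro _; exact le_refl _
  | succ b hab ih =>
    intro hb
    exact le_trans (hπ.2.2.1 i b hb) (ih (by omega))

/-- forward map on the P side: count the 2's in each row -/
def cnt (π : Fin n → ℕ → ℕ) (i : Fin n) : ℕ :=
  ((Finset.range (U x (n - (i : ℕ)))).filter (fun j => π i j = 2)).card

lemma cnt_range {π : Fin n → ℕ → ℕ} (hπ : PU x π) (i : Fin n) :
    (Finset.range (U x (n - (i : ℕ)))).filter (fun j => π i j = 2)
      = Finset.range (cnt x π i) := by
  apply dc_eq_range
  intro a b hab hb
  simp only [Finset.mem_filter, Finset.mem_range] at hb ⊢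
  refine ⟨by omega, ?_⟩
  have h1 := row_anti x hπ i a b hab hb.1
  have h2 := (hπ.1 i a (by omega)).2
  omega

lemma cnt_char {π : Fin n → ℕ → ℕ} (hπ : PU x π) (i : Fin n) {j : ℕ}
    (hj : j < U x (n - (i : ℕ))) : π i j = 2 ↔ j < cnt x π i := by
  have := Finset.ext_iff.mp (cnt_range x hπ i) j
  simp only [Finset.mem_filter, Finset.mem_range] at this
  omega

lemma cnt_le {π : Fin n → ℕ → ℕ} (i : Fin n) : cnt x π i ≤ U x (n - (i : ℕ)) :=
  le_trans (Finset.card_filter_le _ _) (le_of_eq (Finset.card_range _))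

lemma cnt_mem {π : Fin n → ℕ → ℕ} (hπ : PU x π) :
    (∀ i : Fin n, cnt x π i ≤ U x (n - (i : ℕ))) ∧
      ∀ i : Fin n, ∀ h : (i : ℕ) + 1 < n, cnt x π ⟨(i : ℕ) + 1, h⟩ ≤ cnt x π i := by
  refine ⟨fun i => cnt_le x i, fun i h => ?_⟩
  apply Finset.card_le_card
  intro j hj
  simp only [Finset.mem_filter, Finset.mem_range] at hj ⊢
  have hUle : U x (n - ((i : ℕ) + 1)) ≤ U x (n - (i : ℕ)) := U_mono x (by omega)
  have hjU : j < U x (n - (i : ℕ)) := by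
    have := hj.1
    omega
  refine ⟨hjU, ?_⟩
  have hcol := hπ.2.2.2 i h j (by exact hj.1)
  have h2 := (hπ.1 i j hjU).2
  omega

/-- backward map on the P side -/
def fromTP (t : TT n x) : Fin n → ℕ → ℕ :=
  fun i j => if j < t.1 i then 2 else if j < U x (n - (i : ℕ)) then 1 else 0

lemma fromTP_mem (t : TT n x) : PU x (fromTP x t) := by
  have ht1 := t.2.1
  have ht2 := t.2.2
  refine ⟨fun i j hj => ?_, fun i j hj => ?_, fun i j hj => ?_, fun i h j hj => ?_⟩
  · unfold fromTP
    split_ifs <;> omega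
  · have := ht1 i
    unfold fromTP
    split_ifs <;> omega
  · have := ht1 i
    unfold fromTP
    split_ifs <;> omega
  · have hc := ht2 i h
    have hUle : U x (n - ((i : ℕ) + 1)) ≤ U x (n - (i : ℕ)) := U_mono x (by omega)
    unfold fromTP
    have hval : ((⟨(i : ℕ) + 1, h⟩ : Fin n) : ℕ) = (i : ℕ) + 1 := rfl
    rw [hval]
    split_ifs <;> omega

/-- the P-side equivalence -/
def equivP :
    {π : Fin n → ℕ → ℕ //
      (∀ (i : Fin n) (j : ℕ),
          j < ∑ l ∈ Finset.univ.filter (fun l : Fin n => (l : ℕ) + (i : ℕ) < n), x l →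
          1 ≤ π i j ∧ π i j ≤ 2) ∧
      (∀ (i : Fin n) (j : ℕ),
          (∑ l ∈ Finset.univ.filter (fun l : Fin n => (l : ℕ) + (i : ℕ) < n), x l) ≤ j →
          π i j = 0) ∧
      (∀ (i : Fin n) (j : ℕ),
          j + 1 < ∑ l ∈ Finset.univ.filter (fun l : Fin n => (l : ℕ) + (i : ℕ) < n), x l →
          π i (j + 1) ≤ π i j) ∧
      (∀ (i : Fin n) (h : (i : ℕ) + 1 < n) (j : ℕ),
          j < ∑ l ∈ Finset.univ.filter
              (fun l : Fin n => (l : ℕ) + ((i : ℕ) + 1) < n), x l →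
          π ⟨(i : ℕ) + 1, h⟩ j ≤ π i j)} ≃ TT n x where
  toFun π := ⟨cnt x π.1, cnt_mem x ((Pprop_iff x π.1).mp π.2)⟩
  invFun t := ⟨fromTP x t, (Pprop_iff x (fromTP x t)).mpr (fromTP_mem x t)⟩
  left_inv := by
    rintro ⟨π, hπ⟩
    have hU := (Pprop_iff x π).mp hπ
    apply Subtype.ext
    funext i j
    show fromTP x ⟨cnt x π, _⟩ i j = π i j
    unfold fromTP
    simp only
    by_cases hj : j < U x (n - (i : ℕ))
    · by_cases hc : j < cnt x π i
      · rw [if_pos hc]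
        exact ((cnt_char x hU i hj).mpr hc).symm
      · rw [if_neg hc, if_pos hj]
        have h1 := (hU.1 i j hj).1
        have h2 := (hU.1 i j hj).2
        have h3 : ¬ π i j = 2 := fun he => hc ((cnt_char x hU i hj).mp he)
        omega
    · have hcle := cnt_le x (π := π) i
      rw [if_neg (by omega), if_neg hj]
      exact (hU.2.1 i j (by omega)).symm
  right_inv := by
    rintro ⟨t, ht⟩
    apply Subtype.ext
    funext i
    show cnt x (fromTP x ⟨t, ht⟩) i = t i
    unfold cnt
    have hfilt : (Finset.range (U x (n - (i : ℕ)))).filter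
        (fun j => fromTP x ⟨t, ht⟩ i j = 2) = Finset.range (t i) := by
      ext j
      simp only [Finset.mem_filter, Finset.mem_range]
      unfold fromTP
      simp only
      have hti := ht.1 i
      constructor
      · rintro ⟨hj, h2⟩
        split_ifs at h2 <;> omega
      · intro hj
        refine ⟨by omega, ?_⟩
        rw [if_pos hj]
    rw [hfilt, Finset.card_range]

end LPPP

open LPPP in
theorem lattice_points_eq_plane_partitions (n : ℕ) (hn : 0 < n) (x : Fin n → ℕ) :
    Nat.card {y : Fin n → ℤ //
        ∀ i : Fin n, 0 ≤ y i ∧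
          ∑ j ∈ Finset.Iic i, y j ≤ ∑ j ∈ Finset.Iic i, (x j : ℤ)} =
      Nat.card {π : Fin n → ℕ → ℕ //
        (∀ (i : Fin n) (j : ℕ),
            j < ∑ l ∈ Finset.univ.filter (fun l : Fin n => (l : ℕ) + (i : ℕ) < n), x l →
            1 ≤ π i j ∧ π i j ≤ 2) ∧
        (∀ (i : Fin n) (j : ℕ),
            (∑ l ∈ Finset.univ.filter (fun l : Fin n => (l : ℕ) + (i : ℕ) < n), x l) ≤ j →
            π i j = 0) ∧
        (∀ (i : Fin n) (j : ℕ),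
            j + 1 < ∑ l ∈ Finset.univ.filter (fun l : Fin n => (l : ℕ) + (i : ℕ) < n), x l →
            π i (j + 1) ≤ π i j) ∧
        (∀ (i : Fin n) (h : (i : ℕ) + 1 < n) (j : ℕ),
            j < ∑ l ∈ Finset.univ.filter
                (fun l : Fin n => (l : ℕ) + ((i : ℕ) + 1) < n), x l →
            π ⟨(i : ℕ) + 1, h⟩ j ≤ π i j)} :=
  Nat.card_congr ((equivY x).trans (equivP x).symm)
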